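/- Multi-block factorization of value functions (discrete case): let 0 = t_0 < t_1 < ... < t_N = T, suppose for each i a state reduction (θ_{t_i}, θ_{t_{i+1}}, f_{t_i:t_{i+1}}) across [t_i, t_{i+1}] exists and is compatible with the one-step kernels, and suppose the criterion factors as j = j̃ ∘ θ_{t_N}. Define reduced value functions by Ṽ_{t_N} = j̃ and Ṽ_{t_i} = B̃_{t_{i+1}:t_i} Ṽ_{t_{i+1}}, where B̃_{t_{i+1}:t_i} is the reduced Bellman operator across the block. Then the original value functions satisfy V_{t_i} = Ṽ_{t_i} ∘ θ_{t_i} for every i = 0,...,N. -/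

import Mathlib

open scoped ENNReal

/-- History space `H_t = W_0 × ∏_{s=0}^{t-1}(U_s × W_{s+1})`. -/
def Hist (W U : ℕ → Type) : ℕ → Type :=
  fun t => Nat.rec (motive := fun _ => Type) (W 0) (fun s ih => ih × U s × W (s + 1)) t

/-- Transport of a history along an equality of time indices. -/
def hcast {W U : ℕ → Type} {a b : ℕ} (e : a = b) (h : Hist W U a) : Hist W U b := e ▸ h

/-- Noise sequences `w_{t+1:t+n}`. -/
def NoiseSeqE (W : ℕ → Type) (t : ℕ) : ℕ → Type :=
  fun n => Nat.rec (motive := fun _ => Type) PUnit (fun m ih => ih × W (t + m + 1)) n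

/-- The flow `Φ_{t,t+n}^γ` generated by a family of history feedbacks `γ`. -/
def flowE {W U : ℕ → Type} (γ : ∀ s, Hist W U s → U s) :
    ∀ (n t : ℕ), Hist W U t → NoiseSeqE W t n → Hist W U (t + n)
  | 0, _, h, _ => h
  | n + 1, t, h, ws =>
      (flowE γ n t h ws.1, γ (t + n) (flowE γ n t h ws.1), ws.2)

/-- The product `∏_{s=t+1}^{t+n} ρ_{s-1,s}(Φ_{t,s-1}^γ(h_t, w_{t+1:s-1}), {w_s})` of the
one-step kernels evaluated along the flow. -/
noncomputable def probE {W U : ℕ → Type} (ρ : ∀ s, Hist W U s → W (s + 1) → ℝ≥0∞)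
    (γ : ∀ s, Hist W U s → U s) :
    ∀ (n t : ℕ), Hist W U t → NoiseSeqE W t n → ℝ≥0∞
  | 0, _, _, _ => 1
  | n + 1, t, h, ws => probE ρ γ n t h ws.1 * ρ (t + n) (flowE γ n t h ws.1) ws.2

/-- The value function at time `t` (with `n = T - t` remaining steps): the infimum over
history feedbacks of the expected criterion
`Σ_{w_{t+1:T}} j(Φ_{t,T}^γ(h_t, w_{t+1:T})) ∏_{s=t+1}^{T} ρ_{s-1,s}(⋯, {w_s})`. -/
noncomputable def Val {W U : ℕ → Type} (ρ : ∀ s, Hist W U s → W (s + 1) → ℝ≥0∞)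
    (T : ℕ) (j : Hist W U T → ℝ≥0∞) (n t : ℕ) (e : t + n = T) (h : Hist W U t) : ℝ≥0∞ :=
  ⨅ γ : ∀ s, Hist W U s → U s, ∑' ws : NoiseSeqE W t n,
    j (hcast e (flowE γ n t h ws)) * probE ρ γ n t h ws

/-- Partial history space `H_{t+1:t+n} = ∏_{m=0}^{n-1}(U_{t+m} × W_{t+m+1})`. -/
def PartHistE (W U : ℕ → Type) (t : ℕ) : ℕ → Type :=
  fun n => Nat.rec (motive := fun _ => Type) PUnit (fun m ih => ih × U (t + m) × W (t + m + 1)) n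

/-- Splitting a history `h_{t+n}` as `(h_t, h_{t+1:t+n})`. -/
def splitE {W U : ℕ → Type} : ∀ (n t : ℕ), Hist W U (t + n) → Hist W U t × PartHistE W U t n
  | 0, _, h => (h, PUnit.unit)
  | n + 1, t, h => ((splitE n t h.1).1, ((splitE n t h.1).2, h.2.1, h.2.2))

/-- The composed Bellman operator `B_{t+n:t} = B_{t+1:t} ∘ ⋯ ∘ B_{t+n:t+n-1}` across a
time block, with one-step operators
`(B_{s+1:s} φ)(h_s) = inf_{u_s} Σ_{w_{s+1}} φ(h_s,u_s,w_{s+1}) ρ_{s,s+1}(h_s,{w_{s+1}})`. -/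
noncomputable def hBell {W U : ℕ → Type} (ρ : ∀ s, Hist W U s → W (s + 1) → ℝ≥0∞) :
    ∀ (n t : ℕ), (Hist W U (t + n) → ℝ≥0∞) → Hist W U t → ℝ≥0∞
  | 0, _, φ, h => φ h
  | n + 1, t, φ, h =>
      ⨅ u : U t, ∑' w : W (t + 1),
        hBell ρ n (t + 1) (fun h' => φ (hcast (by omega) h')) (h, u, w) * ρ t h w

set_option linter.unusedSectionVars false

section MultiBlockAux

variable {W U : ℕ → Type}

theorem hcast_hcast {a b c : ℕ} (e1 : a = b) (e2 : b = c) (h : Hist W U a) :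
    hcast e2 (hcast e1 h) = hcast (e1.trans e2) h := by subst e1; subst e2; rfl

theorem hcast_self {a : ℕ} (e : a = a) (h : Hist W U a) : hcast e h = h := rfl

/-- Gluing a base history with a partial history. -/
def glueE : ∀ (n t : ℕ), Hist W U t → PartHistE W U t n → Hist W U (t + n)
  | 0, _, h, _ => h
  | n + 1, t, h, p => (glueE n t h p.1, p.2.1, p.2.2)

theorem splitE_glueE : ∀ (n t : ℕ) (h : Hist W U t) (p : PartHistE W U t n),
    splitE n t (glueE n t h p) = (h, p)
  | 0, _, _, _ => rfl
  | n + 1, t, h, p => by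
      show ((splitE n t (glueE n t h p.1)).1,
        ((splitE n t (glueE n t h p.1)).2, p.2.1, p.2.2)) = (h, p)
      rw [splitE_glueE n t h p.1]; rfl

variable [∀ s, Fintype (W s)] [∀ s, Nonempty (W s)] [∀ s, Fintype (U s)] [∀ s, Nonempty (U s)]
  (ρ : ∀ s, Hist W U s → W (s + 1) → ℝ≥0∞)

theorem bell1_congr {a b : ℕ} (e : a = b)
    (φa : Hist W U (a + 1) → ℝ≥0∞) (φb : Hist W U (b + 1) → ℝ≥0∞)
    (hφ : ∀ h, φa h = φb (hcast (by rw [e]) h)) (h : Hist W U a) :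
    (⨅ u : U a, ∑' w : W (a + 1), φa (h, u, w) * ρ a h w)
      = ⨅ u : U b, ∑' w : W (b + 1), φb (hcast e h, u, w) * ρ b (hcast e h) w := by
  subst e
  exact iInf_congr fun u => tsum_congr fun w => by rw [hφ (h, u, w)]; rfl
theorem hBell_succ : ∀ (n t : ℕ) (φ : Hist W U (t + (n + 1)) → ℝ≥0∞) (h : Hist W U t),
    hBell ρ (n + 1) t φ h
      = hBell ρ n t
          (fun h' => ⨅ u : U (t + n), ∑' w : W (t + n + 1), φ (h', u, w) * ρ (t + n) h' w) h
  | 0, t, φ, h => rfl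
  | n + 1, t, φ, h => by
    show (⨅ u : U t, ∑' w : W (t + 1),
        hBell ρ (n + 1) (t + 1)
          (fun h' => φ (hcast (show (t+1)+(n+1) = t+(n+1)+1 by omega) h')) (h, u, w) * ρ t h w)
      = ⨅ u : U t, ∑' w : W (t + 1),
        hBell ρ n (t + 1)
          (fun h' : Hist W U ((t+1)+n) => ⨅ u' : U (t + (n + 1)), ∑' w' : W (t + (n + 1) + 1),
            φ ((hcast (show (t+1)+n = t+(n+1) by omega) h' : Hist W U (t+(n+1))), u', w')
              * ρ (t + (n + 1)) (hcast (show (t+1)+n = t+(n+1) by omega) h') w')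
          (h, u, w) * ρ t h w
    refine iInf_congr fun u => tsum_congr fun w => ?_
    rw [hBell_succ n (t + 1) _ (h, u, w)]
    have hfun : (fun h' : Hist W U ((t+1)+n) => ⨅ u' : U ((t+1)+n), ∑' w' : W ((t+1)+n+1),
          (fun h'' => φ (hcast (show (t+1)+(n+1) = t+(n+1)+1 by omega) h'')) (h', u', w')
            * ρ ((t+1)+n) h' w')
        = (fun h' : Hist W U ((t+1)+n) => ⨅ u' : U (t + (n + 1)), ∑' w' : W (t + (n + 1) + 1),
            φ ((hcast (show (t+1)+n = t+(n+1) by omega) h' : Hist W U (t+(n+1))), u', w')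
              * ρ (t + (n + 1)) (hcast (show (t+1)+n = t+(n+1) by omega) h') w') := by
      funext h'
      exact bell1_congr ρ (show (t+1)+n = t+(n+1) by omega) _ _ (fun x => rfl) h'
    rw [hfun]
theorem hBell_congr {n n' t t' : ℕ} (en : n = n') (et : t = t')
    (φ : Hist W U (t' + n') → ℝ≥0∞) (h : Hist W U t) :
    hBell ρ n t (fun h'' => φ (hcast (by rw [en, et]) h'')) h
      = hBell ρ n' t' φ (hcast et h) := by
  subst en; subst et; rfl

theorem hBell_add : ∀ (b a t : ℕ) (φ : Hist W U (t + (a + b)) → ℝ≥0∞) (h : Hist W U t),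
    hBell ρ (a + b) t φ h
      = hBell ρ a t (fun h' => hBell ρ b (t + a)
          (fun h'' => φ (hcast (show (t+a)+b = t+(a+b) by omega) h'')) h') h
  | 0, a, t, φ, h => rfl
  | b + 1, a, t, φ, h => by
    rw [show hBell ρ (a + (b + 1)) t φ h = hBell ρ ((a + b) + 1) t φ h from rfl,
      hBell_succ ρ (a + b) t φ h, hBell_add b a t _ h]
    congr 1
    funext h'
    rw [hBell_succ ρ b (t + a) _ h']
    congr 1
    funext h''
    exact (bell1_congr ρ (show (t+a)+b = t+(a+b) by omega) _ _ (fun x => rfl) h'').symm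

/-- Fiber invariance of the composed Bellman operator. -/
theorem hBell_invariant : ∀ (n t0 : ℕ) (Φ : Hist W U (t0 + n) → ℝ≥0∞) (h h' : Hist W U t0),
    (∀ m, m < n → ∀ (p : PartHistE W U t0 m) (w : W (t0 + m + 1)),
        ρ (t0 + m) (glueE m t0 h p) w = ρ (t0 + m) (glueE m t0 h' p) w) →
    (∀ p : PartHistE W U t0 n, Φ (glueE n t0 h p) = Φ (glueE n t0 h' p)) →
    hBell ρ n t0 Φ h = hBell ρ n t0 Φ h'
  | 0, t0, Φ, h, h', _, hΦ => hΦ PUnit.unit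
  | n + 1, t0, Φ, h, h', hρ, hΦ => by
    rw [hBell_succ, hBell_succ]
    refine hBell_invariant n t0 _ h h' (fun m hm => hρ m (by omega)) (fun p => ?_)
    refine iInf_congr fun u => tsum_congr fun w => ?_
    rw [show Φ (glueE n t0 h p, u, w) = Φ (glueE n t0 h' p, u, w) from hΦ (p, u, w),
      show ρ (t0 + n) (glueE n t0 h p) w = ρ (t0 + n) (glueE n t0 h' p) w from hρ n (by omega) p w]
theorem tsum_noise_succ {t n : ℕ} (f : NoiseSeqE W t (n + 1) → ℝ≥0∞) :
    ∑' ws : NoiseSeqE W t (n + 1), f ws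
      = ∑' ws : NoiseSeqE W t n, ∑' w : W (t + n + 1), f (ws, w) :=
  ENNReal.tsum_prod (f := fun a b => f (a, b))

theorem tsum_noise_zero {t : ℕ} (f : NoiseSeqE W t 0 → ℝ≥0∞) :
    ∑' ws : NoiseSeqE W t 0, f ws = f PUnit.unit :=
  tsum_eq_single (f := f) PUnit.unit (fun b hb => absurd (Subsingleton.elim (α := PUnit) b PUnit.unit) hb)

theorem flowE_congr {γ γ' : ∀ s, Hist W U s → U s} :
    ∀ (n t : ℕ), (∀ m, m < n → ∀ h', γ (t + m) h' = γ' (t + m) h') →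
      ∀ (h : Hist W U t) (ws : NoiseSeqE W t n), flowE γ n t h ws = flowE γ' n t h ws
  | 0, _, _, _, _ => rfl
  | n + 1, t, hag, h, ws => by
    show (flowE γ n t h ws.1, γ (t + n) (flowE γ n t h ws.1), ws.2)
      = (flowE γ' n t h ws.1, γ' (t + n) (flowE γ' n t h ws.1), ws.2)
    rw [flowE_congr n t (fun m hm => hag m (by omega)) h ws.1, hag n (by omega)]

theorem probE_congr {γ γ' : ∀ s, Hist W U s → U s} :
    ∀ (n t : ℕ), (∀ m, m < n → ∀ h', γ (t + m) h' = γ' (t + m) h') →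
      ∀ (h : Hist W U t) (ws : NoiseSeqE W t n), probE ρ γ n t h ws = probE ρ γ' n t h ws
  | 0, _, _, _, _ => rfl
  | n + 1, t, hag, h, ws => by
    show probE ρ γ n t h ws.1 * ρ (t + n) (flowE γ n t h ws.1) ws.2
      = probE ρ γ' n t h ws.1 * ρ (t + n) (flowE γ' n t h ws.1) ws.2
    rw [probE_congr n t (fun m hm => hag m (by omega)) h ws.1,
      flowE_congr n t (fun m hm => hag m (by omega)) h ws.1]

theorem exists_min_inf {α : Type} [Finite α] [Nonempty α] (F : α → ℝ≥0∞) :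
    ∃ a, (⨅ x, F x) = F a := by
  obtain ⟨a, ha⟩ := Finite.exists_min F
  exact ⟨a, le_antisymm (iInf_le _ _) (le_iInf ha)⟩

theorem Val_zero (T' t : ℕ) (e : t + 0 = T') (j : Hist W U T' → ℝ≥0∞) (h : Hist W U t) :
    Val ρ T' j 0 t e h = j (hcast e h) := by
  unfold Val
  have h1 : ∀ γ : ∀ s, Hist W U s → U s,
      (∑' ws : NoiseSeqE W t 0, j (hcast e (flowE γ 0 t h ws)) * probE ρ γ 0 t h ws)
        = j (hcast e h) := by
    intro γ
    rw [tsum_noise_zero]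
    show j (hcast e h) * 1 = j (hcast e h)
    rw [mul_one]
  simp only [h1]
  exact iInf_const
theorem Val_succ (n t : ℕ) (j : Hist W U (t + (n + 1)) → ℝ≥0∞) (h : Hist W U t) :
    Val ρ (t + (n + 1)) j (n + 1) t rfl h
      = Val ρ (t + n)
          (fun h' => ⨅ u : U (t + n), ∑' w : W (t + n + 1), j (h', u, w) * ρ (t + n) h' w)
          n t rfl h := by
  classical
  unfold Val
  simp only [hcast_self]
  have hcost : ∀ γ : ∀ s, Hist W U s → U s,
      (∑' ws : NoiseSeqE W t (n + 1),
          j (flowE γ (n + 1) t h ws) * probE ρ γ (n + 1) t h ws)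
        = ∑' ws : NoiseSeqE W t n,
            (∑' w : W (t + n + 1),
              j (flowE γ n t h ws, γ (t + n) (flowE γ n t h ws), w)
                * ρ (t + n) (flowE γ n t h ws) w) * probE ρ γ n t h ws := by
    intro γ
    rw [tsum_noise_succ]
    refine tsum_congr fun ws => ?_
    rw [← ENNReal.tsum_mul_right]
    refine tsum_congr fun w => ?_
    show j (flowE γ n t h ws, γ (t + n) (flowE γ n t h ws), w)
        * (probE ρ γ n t h ws * ρ (t + n) (flowE γ n t h ws) w) = _
    ring
  simp only [hcost]
  apply le_antisymm
  · refine le_iInf fun γ => ?_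
    have hsel := fun h' : Hist W U (t + n) =>
      exists_min_inf (fun u : U (t + n) => ∑' w : W (t + n + 1), j (h', u, w) * ρ (t + n) h' w)
    choose gopt hgopt using hsel
    set γ' : ∀ s, Hist W U s → U s := fun s =>
      if hs : s = t + n then
        fun h' => cast (congrArg U hs.symm) (gopt (hcast hs h'))
      else γ s with hγ'
    have hag : ∀ m, m < n → ∀ h', γ' (t + m) h' = γ (t + m) h' := by
      intro m hm h'
      have hne : ¬ (t + m = t + n) := by omega
      simp only [hγ', dif_neg hne]
    have htop : ∀ h', γ' (t + n) h' = gopt h' := by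
      intro h'
      simp only [hγ', dif_pos rfl]
      rfl
    refine le_trans (iInf_le _ γ') (le_of_eq ?_)
    refine tsum_congr fun ws => ?_
    rw [flowE_congr n t hag h ws, probE_congr ρ n t hag h ws, htop, ← hgopt]
  · refine le_iInf fun γ => le_trans (iInf_le _ γ) ?_
    refine Summable.tsum_le_tsum (fun ws => ?_) ENNReal.summable ENNReal.summable
    exact mul_le_mul_left (iInf_le _ (γ (t + n) (flowE γ n t h ws))) _
theorem Val_eq_hBell : ∀ (n t T : ℕ) (e : t + n = T) (j : Hist W U T → ℝ≥0∞) (h : Hist W U t),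
    Val ρ T j n t e h = hBell ρ n t (fun h' => j (hcast e h')) h
  | 0, t, T, e, j, h => Val_zero ρ T t e j h
  | n + 1, t, T, e, j, h => by
    subst e
    rw [Val_succ ρ n t j h, Val_eq_hBell n t (t + n) rfl _ h, hBell_succ ρ n t _ h]
    rfl
end MultiBlockAux
/-- multi-block factorization of value functions (discrete case). Given block
times `0 = t_0 < t_1 < ⋯ < t_N = T`, compatible state reductions across each block
`[t_i, t_{i+1}]`, and a criterion factoring as `j = j̃ ∘ θ_{t_N}`, there exist reduced Bellman
operators `B̃_{t_{i+1}:t_i}` (characterized by the commutation property of Proposition DPB)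
such that the reduced value functions `Ṽ_{t_N} = j̃`, `Ṽ_{t_i} = B̃_{t_{i+1}:t_i} Ṽ_{t_{i+1}}`
satisfy `V_{t_i} = Ṽ_{t_i} ∘ θ_{t_i}` for every `i = 0,…,N`. -/
theorem multi_block_factorization {W U : ℕ → Type}
    [∀ s, Fintype (W s)] [∀ s, Nonempty (W s)] [∀ s, Fintype (U s)] [∀ s, Nonempty (U s)]
    (T N : ℕ) (hN : 0 < N)
    (ρ : ∀ s, Hist W U s → W (s + 1) → ℝ≥0∞)
    (hpmf : ∀ s (h : Hist W U s), ∑' w : W (s + 1), ρ s h w = 1)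
    (t : ℕ → ℕ) (ht0 : t 0 = 0) (htN : t N = T)
    (hmono : ∀ i, i < N → t i < t (i + 1))
    (hle : ∀ i, i ≤ N → t i ≤ T)
    (X : ℕ → Type)
    (θ : ∀ i, Hist W U (t i) → X i)
    (f : ∀ i, X i → PartHistE W U (t i) (t (i + 1) - t i) → X (i + 1))
    (hred : ∀ i (hi : i < N) (h : Hist W U (t i + (t (i + 1) - t i))),
      θ (i + 1) (hcast (Nat.add_sub_cancel' (Nat.le_of_lt (hmono i hi))) h)
        = f i (θ i (splitE (t (i + 1) - t i) (t i) h).1) (splitE (t (i + 1) - t i) (t i) h).2)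
    (ρt : ∀ i m, X i → PartHistE W U (t i) m → W (t i + m + 1) → ℝ≥0∞)
    (hcomp : ∀ i, i < N → ∀ m, m < t (i + 1) - t i →
      ∀ (h : Hist W U (t i + m)) (w : W (t i + m + 1)),
        ρ (t i + m) h w = ρt i m (θ i (splitE m (t i) h).1) (splitE m (t i) h).2 w)
    (j : Hist W U T → ℝ≥0∞) (jt : X N → ℝ≥0∞)
    (hj : ∀ h : Hist W U T, j h = jt (θ N (hcast htN.symm h))) :
    ∃ Bt : ∀ i, (X (i + 1) → ℝ≥0∞) → X i → ℝ≥0∞,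
      (∀ i (hi : i < N) (φt : X (i + 1) → ℝ≥0∞) (h : Hist W U (t i)),
        hBell ρ (t (i + 1) - t i) (t i)
          (fun h' => φt (θ (i + 1) (hcast (Nat.add_sub_cancel' (Nat.le_of_lt (hmono i hi))) h'))) h
          = Bt i φt (θ i h)) ∧
      ∃ Vt : ∀ i, X i → ℝ≥0∞,
        Vt N = jt ∧
        (∀ i, i < N → Vt i = Bt i (Vt (i + 1))) ∧
        (∀ i (hi : i ≤ N) (h : Hist W U (t i)),
          Val ρ T j (T - t i) (t i) (Nat.add_sub_cancel' (hle i hi)) h = Vt i (θ i h)) := by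
  classical
  set Bt : ∀ i, (X (i + 1) → ℝ≥0∞) → X i → ℝ≥0∞ := fun i φt x =>
    if hi : t i ≤ t (i + 1) then
      ⨅ hh : {h : Hist W U (t i) // θ i h = x},
        hBell ρ (t (i + 1) - t i) (t i)
          (fun h' => φt (θ (i + 1) (hcast (Nat.add_sub_cancel' hi) h'))) hh.1
    else 0 with hBtdef
  set Vt : ∀ i, X i → ℝ≥0∞ := fun i =>
    if hiN : i = N then (fun x : X i => jt (hiN ▸ x))
    else if hi : i ≤ N then
      (fun x => ⨅ hh : {h : Hist W U (t i) // θ i h = x},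
        Val ρ T j (T - t i) (t i) (Nat.add_sub_cancel' (hle i hi)) hh.1)
    else fun _ => 0 with hVtdef
  -- fiber constancy of the block Bellman operator
  have FC : ∀ i (hi : i < N) (φt : X (i + 1) → ℝ≥0∞) (h h' : Hist W U (t i)),
      θ i h = θ i h' →
      hBell ρ (t (i + 1) - t i) (t i)
        (fun h'' => φt (θ (i + 1)
          (hcast (Nat.add_sub_cancel' (Nat.le_of_lt (hmono i hi))) h''))) h
      = hBell ρ (t (i + 1) - t i) (t i)
        (fun h'' => φt (θ (i + 1)
          (hcast (Nat.add_sub_cancel' (Nat.le_of_lt (hmono i hi))) h''))) h' := by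
    intro i hi φt h h' hθ
    refine hBell_invariant ρ _ _ _ h h' (fun m hm p w => ?_) (fun p => ?_)
    · rw [hcomp i hi m hm, hcomp i hi m hm, splitE_glueE, splitE_glueE]
      simp only [hθ]
    · simp only [hred i hi, splitE_glueE]
      simp only [hθ]
  -- commutation property
  have comm : ∀ i (hi : i < N) (φt : X (i + 1) → ℝ≥0∞) (h : Hist W U (t i)),
      hBell ρ (t (i + 1) - t i) (t i)
        (fun h' => φt (θ (i + 1)
          (hcast (Nat.add_sub_cancel' (Nat.le_of_lt (hmono i hi))) h'))) h
      = Bt i φt (θ i h) := by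
    intro i hi φt h
    rw [hBtdef]
    simp only
    rw [dif_pos (Nat.le_of_lt (hmono i hi))]
    apply le_antisymm
    · refine le_iInf fun hh => ?_
      exact le_of_eq (FC i hi φt h hh.1 hh.2.symm)
    · exact iInf_le _ (⟨h, rfl⟩ : {h' : Hist W U (t i) // θ i h' = θ i h})
  have hVtN : Vt N = jt := by
    rw [hVtdef]
    simp only
    rw [dif_pos trivial]
  -- the block dynamic-programming chain
  have chain : ∀ i (hi : i < N),
      (∀ (e' : t (i + 1) + (T - t (i + 1)) = T) (h₁ : Hist W U (t (i + 1))),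
        Val ρ T j (T - t (i + 1)) (t (i + 1)) e' h₁ = Vt (i + 1) (θ (i + 1) h₁)) →
      ∀ (e : t i + (T - t i) = T) (h : Hist W U (t i)),
        Val ρ T j (T - t i) (t i) e h
          = hBell ρ (t (i + 1) - t i) (t i)
              (fun h' => Vt (i + 1) (θ (i + 1)
                (hcast (Nat.add_sub_cancel' (Nat.le_of_lt (hmono i hi))) h'))) h := by
    intro i hi H e h
    have hti : t i ≤ t (i + 1) := Nat.le_of_lt (hmono i hi)
    have hti1 : t (i + 1) ≤ T := hle (i + 1) (by omega)
    have hab : (t (i + 1) - t i) + (T - t (i + 1)) = T - t i := by omega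
    have hE : t i + (t (i + 1) - t i) = t (i + 1) := Nat.add_sub_cancel' hti
    have hE2 : t (i + 1) + (T - t (i + 1)) = T := Nat.add_sub_cancel' hti1
    rw [Val_eq_hBell]
    have s1 := hBell_congr ρ hab rfl (fun h' => j (hcast e h')) h
    rw [hcast_self] at s1
    rw [← s1, hBell_add ρ (T - t (i + 1)) (t (i + 1) - t i) (t i)]
    refine congrArg (fun F => hBell ρ (t (i + 1) - t i) (t i) F h) (funext fun h' => ?_)
    have s3 := hBell_congr ρ (rfl : T - t (i + 1) = T - t (i + 1)) hE
      (fun h'' : Hist W U (t (i + 1) + (T - t (i + 1))) => j (hcast hE2 h'')) h'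
    refine Eq.trans ?_ (Eq.trans s3 ?_)
    · exact congrArg (fun F => hBell ρ (T - t (i + 1)) (t i + (t (i + 1) - t i)) F h')
        (funext fun x => by simp only [hcast_hcast])
    · rw [← Val_eq_hBell ρ (T - t (i + 1)) (t (i + 1)) T hE2 j (hcast hE h')]
      exact H hE2 (hcast hE h')
  -- one reduced Bellman step on the reduced value functions
  have C : ∀ i (hi : i < N),
      (∀ (e' : t (i + 1) + (T - t (i + 1)) = T) (h₁ : Hist W U (t (i + 1))),
        Val ρ T j (T - t (i + 1)) (t (i + 1)) e' h₁ = Vt (i + 1) (θ (i + 1) h₁)) →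
      ∀ x, Vt i x = Bt i (Vt (i + 1)) x := by
    intro i hi H x
    rw [hVtdef, hBtdef]
    simp only
    rw [dif_neg (by omega : ¬ i = N), dif_pos (by omega : i ≤ N),
      dif_pos (Nat.le_of_lt (hmono i hi))]
    refine iInf_congr fun hh => ?_
    exact chain i hi H (Nat.add_sub_cancel' (hle i (by omega))) hh.1
  -- main downward induction
  have MAIN : ∀ k i, i + k = N → ∀ (e : t i + (T - t i) = T) (h : Hist W U (t i)),
      Val ρ T j (T - t i) (t i) e h = Vt i (θ i h) := by
    intro k
    induction k with
    | zero =>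
      intro i hik e h
      have hiN : i = N := by omega
      subst hiN
      rw [Val_eq_hBell]
      have en : T - t i = 0 := by omega
      have e0 : t i + 0 = T := by omega
      have s0 := hBell_congr ρ en rfl (fun h'' : Hist W U (t i + 0) => j (hcast e0 h'')) h
      rw [hcast_self] at s0
      have hfun : (fun h' : Hist W U (t i + (T - t i)) => j (hcast e h'))
          = (fun h'' => (fun x : Hist W U (t i + 0) => j (hcast e0 x))
              (hcast (by rw [en] : t i + (T - t i) = t i + 0) h'')) :=
        funext fun x => by simp only [hcast_hcast]
      rw [hfun, s0]
      show j (hcast e0 (hcast rfl h)) = Vt i (θ i h)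
      rw [hVtN, hj]
      rw [hcast_hcast, hcast_hcast, hcast_self]
    | succ k ih =>
      intro i hik e h
      have hi : i < N := by omega
      exact (chain i hi (fun e' h₁ => ih (i + 1) (by omega) e' h₁) e h).trans
        ((comm i hi (Vt (i + 1)) h).trans
          (C i hi (fun e' h₁ => ih (i + 1) (by omega) e' h₁) (θ i h)).symm)
  refine ⟨Bt, comm, Vt, hVtN, ?_, ?_⟩
  · intro i hi
    funext x
    exact C i hi (fun e' h₁ => MAIN (N - (i + 1)) (i + 1) (by omega) e' h₁) x
  · intro i hi h
    exact MAIN (N - i) i (by omega) (Nat.add_sub_cancel' (hle i hi)) h
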